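/- For integers n ≥ 1 and 1 ≤ m ≤ n, let A be the n×n matrix whose (k,j)-entry is j^{2k-1} (k, j = 1, …, n), and let A_m be the matrix obtained from A by replacing its m-th column with the first standard basis vector e₁ (entry 1 in row 1, zeros elsewhere). Then det A_m = (−1)^{m+1} (n!/m)³ ∏_{1 ≤ i < j ≤ n, i ≠ m, j ≠ m} (j² − i²). -/

import Mathlib

open Finset

/-- For integers `n ≥ 1` and `1 ≤ m ≤ n`, let `A` be the `n × n` matrix with
`(k, j)`-entry `j ^ (2k - 1)` (`k, j = 1, …, n`), and let `A_m` be `A` with its `m`-th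
column replaced by the first standard basis vector `e₁`.  Then
`det A_m = (-1)^(m+1) * (n!/m)³ * ∏_{1 ≤ i < j ≤ n, i ≠ m, j ≠ m} (j² - i²)`. -/
theorem det_cramer_numerator (n : ℕ) (hn : 1 ≤ n) (m : Fin n) :
    Matrix.det
      (Matrix.updateCol
        (fun k j : Fin n => ((j.1 + 1 : ℝ)) ^ (2 * (k.1 + 1) - 1))
        m
        (fun k : Fin n => if k.1 = 0 then (1 : ℝ) else 0)) =
      (-1 : ℝ) ^ (m.1 + 1 + 1) * ((n.factorial : ℝ) / (m.1 + 1 : ℝ)) ^ 3 *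
        ∏ j ∈ (Finset.range n).filter (fun j => j ≠ m.1),
          ∏ i ∈ (Finset.range j).filter (fun i => i ≠ m.1),
            (((j + 1 : ℝ)) ^ 2 - ((i + 1 : ℝ)) ^ 2) := by
  obtain ⟨N, rfl⟩ : ∃ N, n = N + 1 := ⟨n - 1, by omega⟩
  set σ : Fin N → ℕ := fun j => (m.succAbove j).1 with hσ
  set f : Fin N → ℝ := fun j => (σ j + 1 : ℝ) with hf
  -- Laplace expansion along column m
  rw [Matrix.det_succ_column _ m, Finset.sum_eq_single (0 : Fin (N + 1))]
  rotate_left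
  · intro i _ hi
    erw [Matrix.updateCol_apply]; rw [if_pos rfl, if_neg (by simpa using Fin.val_ne_of_ne hi)]
    ring
  · simp
  erw [Matrix.updateCol_apply]; rw [if_pos rfl, if_pos (show ((0 : Fin (N+1)) : ℕ) = 0 from rfl)]
  -- the minor
  have hminor : (Matrix.updateCol
        (fun k j : Fin (N+1) => ((j.1 + 1 : ℝ)) ^ (2 * (k.1 + 1) - 1))
        m
        (fun k : Fin (N+1) => if k.1 = 0 then (1 : ℝ) else 0)).submatrix
        (Fin.succAbove 0) m.succAbove
      = Matrix.of (fun k j : Fin N => (f j) ^ 3 * ((f j ^ 2) ^ (k.1))) := by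
    ext k j
    rw [Matrix.submatrix_apply]; erw [Matrix.updateCol_apply]; rw [
      if_neg (Fin.succAbove_ne m j)]
    have h0 : ((0 : Fin (N+1)).succAbove k).1 = k.1 + 1 := by
      simp [Fin.succAbove_zero]
    rw [h0]
    have : 2 * (k.1 + 1 + 1) - 1 = 3 + 2 * k.1 := by omega
    rw [this, pow_add, pow_mul]
    rfl
  rw [hminor]
  have hcol : Matrix.of (fun k j : Fin N => (f j) ^ 3 * ((f j ^ 2) ^ (k.1)))
      = Matrix.of (fun k j : Fin N => (fun x => f x ^ 3) j *
          Matrix.transpose (Matrix.vandermonde (fun x => f x ^ 2)) k j) := by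
    ext k j
    simp [Matrix.vandermonde]
  rw [hcol, Matrix.det_mul_row, Matrix.det_transpose, Matrix.det_vandermonde]
  -- product of f equals n!/(m+1)
  have hprodf : ∏ j : Fin N, f j = ((N+1).factorial : ℝ) / (m.1 + 1 : ℝ) := by
    have h1 : ∏ i : Fin (N+1), ((i.1 + 1 : ℕ) : ℝ)
        = ((m.1 + 1 : ℕ) : ℝ) * ∏ j : Fin N, f j := by
      rw [Fin.prod_univ_succAbove (fun i : Fin (N+1) => ((i.1 + 1 : ℕ) : ℝ)) m]
      simp [hf, hσ]
    have h2 : ∏ i : Fin (N+1), ((i.1 + 1 : ℕ) : ℝ) = ((N+1).factorial : ℝ) := by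
      rw [Fin.prod_univ_eq_prod_range (fun i => ((i + 1 : ℕ) : ℝ))]
      rw [← Nat.cast_prod, Finset.prod_range_add_one_eq_factorial]
    have hm : ((m.1 + 1 : ℕ) : ℝ) ≠ 0 := by positivity
    rw [eq_div_iff (by positivity)]
    rw [← h2, h1]
    push_cast; ring
  -- the Vandermonde product equals the filtered double product
  have hσlt : ∀ {i j : Fin N}, i < j → σ i < σ j := by
    intro i j hij
    exact (Fin.succAbove_lt_succAbove_iff (p := m)).mpr hij
  have hprodV : (∏ i : Fin N, ∏ j ∈ Ioi i, ((f j ^ 2) - (f i ^ 2)))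
      = ∏ j ∈ (Finset.range (N+1)).filter (fun j => j ≠ m.1),
          ∏ i ∈ (Finset.range j).filter (fun i => i ≠ m.1),
            (((j + 1 : ℝ)) ^ 2 - ((i + 1 : ℝ)) ^ 2) := by
    rw [Finset.prod_sigma', Finset.prod_sigma']
    refine Finset.prod_bij (fun p _ => (⟨σ p.2, σ p.1⟩ : Σ _ : ℕ, ℕ)) ?_ ?_ ?_ ?_
    · rintro ⟨i, j⟩ hp
      rw [Finset.mem_sigma] at hp ⊢
      obtain ⟨-, hij⟩ := hp
      rw [Finset.mem_Ioi] at hij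
      refine ⟨?_, ?_⟩ <;> rw [Finset.mem_filter, Finset.mem_range]
      · exact ⟨(m.succAbove j).2, Fin.val_ne_of_ne (Fin.succAbove_ne m j)⟩
      · exact ⟨hσlt hij, Fin.val_ne_of_ne (Fin.succAbove_ne m i)⟩
    · rintro ⟨i₁, j₁⟩ h₁ ⟨i₂, j₂⟩ h₂ h
      have hinj : Function.Injective σ :=
        fun a b hab => Fin.succAbove_right_injective (Fin.val_injective hab)
      have h1 : σ j₁ = σ j₂ := congrArg Sigma.fst h
      have h2 : σ i₁ = σ i₂ := congrArg (fun p : Σ _ : ℕ, ℕ => p.2) h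
      obtain rfl := hinj h1
      obtain rfl := hinj h2
      rfl
    · rintro ⟨j, i⟩ hb
      rw [Finset.mem_sigma, Finset.mem_filter, Finset.mem_filter,
        Finset.mem_range, Finset.mem_range] at hb
      obtain ⟨⟨hjN, hjm⟩, hij, him⟩ := hb
      dsimp only at hjN hjm hij him
      obtain ⟨j', hj'⟩ := Fin.exists_succAbove_eq
        (x := (⟨j, hjN⟩ : Fin (N+1))) (y := m) (by simpa [Fin.ext_iff] using hjm)
      obtain ⟨i', hi'⟩ := Fin.exists_succAbove_eq
        (x := (⟨i, by omega⟩ : Fin (N+1))) (y := m) (by simpa [Fin.ext_iff] using him)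
      have hσj : σ j' = j := by simp only [hσ]; rw [hj']
      have hσi : σ i' = i := by simp only [hσ]; rw [hi']
      refine ⟨⟨i', j'⟩, ?_, ?_⟩
      · rw [Finset.mem_sigma, Finset.mem_Ioi]
        refine ⟨Finset.mem_univ _, ?_⟩
        show i' < j'
        by_contra hle
        push_neg at hle
        rcases lt_or_eq_of_le hle with h | h
        · have := hσlt h
          omega
        · rw [h] at hσj; omega
      · dsimp only
        subst hσj hσi
        rfl
    · rintro ⟨i, j⟩ -
      simp [hf]
  rw [hprodV, Finset.prod_pow, hprodf]
  have h0m : ((0 : Fin (N+1)) : ℕ) + m.1 = m.1 := by simp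
  rw [h0m, show (-1:ℝ)^(m.1+1+1) = (-1)^m.1 by rw [pow_succ, pow_succ]; ring]
  ring
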